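/- If a set A ⊆ ℤ is a Λ_p set for some p > 2, i.e., ‖f‖_p ≤ C‖f‖_2 for all trigonometric polynomials f with frequencies in A, then |A ∩ [−N, N]| ≤ C' N^{2/p} for some constant C' depending on C and p and all N ≥ 1. -/

import Mathlib

open Complex intervalIntegral MeasureTheory

lemma int_exp_int (k : ℤ) :
    (∫ x in (0:ℝ)..1, Complex.exp (2 * Real.pi * Complex.I * k * x)) = if k = 0 then 1 else 0 := by
  split_ifs with h
  · simp [h]
  · have hc : (2 * Real.pi * Complex.I * k : ℂ) ≠ 0 := by
      simp [Real.pi_ne_zero, Complex.I_ne_zero, h]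
    rw [integral_exp_mul_complex hc]
    have : Complex.exp (2 * Real.pi * Complex.I * k * 1) = 1 := by
      rw [mul_one]
      have := Complex.exp_int_mul_two_pi_mul_I k
      rw [← this]; ring_nf
    rw [mul_one] at this
    push_cast
    rw [mul_one, mul_zero, this, Complex.exp_zero, sub_self, zero_div]

lemma l2_eq (S : Finset ℤ) :
    (∫ x in (0:ℝ)..1,
        ‖∑ n ∈ S, Complex.exp (2 * Real.pi * Complex.I * n * x)‖ ^ 2) = S.card := by
  have key : ∀ x : ℝ, (‖∑ n ∈ S, Complex.exp (2 * Real.pi * Complex.I * n * x)‖) ^ 2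
      = (∑ n ∈ S, ∑ m ∈ S, Complex.exp (2 * Real.pi * Complex.I * (↑(n - m) : ℤ) * x)).re := by
    intro x
    set z := ∑ n ∈ S, Complex.exp (2 * Real.pi * Complex.I * n * x) with hz
    have h1 : z * (starRingEnd ℂ) z
        = ∑ n ∈ S, ∑ m ∈ S, Complex.exp (2 * Real.pi * Complex.I * (↑(n - m) : ℤ) * x) := by
      rw [hz, map_sum, Finset.sum_mul_sum]
      refine Finset.sum_congr rfl fun n _ => Finset.sum_congr rfl fun m _ => ?_
      rw [← Complex.exp_conj, ← Complex.exp_add]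
      congr 1
      simp only [map_mul, Complex.conj_I, Complex.conj_ofReal, map_ofNat, map_intCast]
      push_cast
      ring
    calc ‖z‖ ^ 2 = ((Complex.normSq z : ℂ)).re := by
          rw [Complex.sq_norm, Complex.ofReal_re]
      _ = (z * (starRingEnd ℂ) z).re := by rw [Complex.mul_conj]
      _ = _ := by rw [h1]
  have hcont : ∀ c : ℂ, Continuous fun x : ℝ => Complex.exp (c * x) :=
    fun c => Complex.continuous_exp.comp (by continuity)
  have hg : Continuous fun x : ℝ =>
      ∑ n ∈ S, ∑ m ∈ S, Complex.exp (2 * Real.pi * Complex.I * (↑(n - m) : ℤ) * x) := by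
    refine continuous_finset_sum _ fun n _ => continuous_finset_sum _ fun m _ => ?_
    exact hcont _
  have h2 : (∫ x in (0:ℝ)..1,
      ∑ n ∈ S, ∑ m ∈ S, Complex.exp (2 * Real.pi * Complex.I * (↑(n - m) : ℤ) * x)) = S.card := by
    rw [intervalIntegral.integral_finset_sum
      (fun n _ => (continuous_finset_sum _ fun m _ => hcont _).intervalIntegrable _ _)]
    have : ∀ n ∈ S, (∫ x in (0:ℝ)..1,
        ∑ m ∈ S, Complex.exp (2 * Real.pi * Complex.I * (↑(n - m) : ℤ) * x)) = 1 := by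
      intro n hn
      rw [intervalIntegral.integral_finset_sum (fun m _ => (hcont _).intervalIntegrable _ _)]
      have : ∀ m ∈ S, (∫ x in (0:ℝ)..1,
          Complex.exp (2 * Real.pi * Complex.I * (↑(n - m) : ℤ) * x)) = if n - m = 0 then 1 else 0 :=
        fun m _ => int_exp_int (n - m)
      rw [Finset.sum_congr rfl this]
      simp only [sub_eq_zero]
      rw [Finset.sum_ite_eq S n fun _ => (1:ℂ)]
      simp [hn]
    rw [Finset.sum_congr rfl this]
    simp
  rw [intervalIntegral.integral_congr (fun x _ => key x)]
  rw [intervalIntegral.integral_of_le (by norm_num : (0:ℝ) ≤ 1)] at h2 ⊢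
  have h3 := integral_re (μ := MeasureTheory.volume.restrict (Set.Ioc (0:ℝ) 1)) hg.integrableOn_Ioc
  simp only [RCLike.re_to_complex] at h3
  rw [h3, h2]
  simp

lemma lower_bound (S : Finset ℤ) (N : ℕ) (hN : 1 ≤ N) (hS : ∀ n ∈ S, |n| ≤ (N:ℤ))
    {x : ℝ} (hx0 : 0 ≤ x) (hx : x ≤ 1/(32*N)) :
    (S.card : ℝ)/2 ≤ ‖∑ n ∈ S, Complex.exp (2*Real.pi*Complex.I*n*x)‖ := by
  have hNpos : (0:ℝ) < N := by exact_mod_cast hN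
  have hterm : ∀ n ∈ S, ‖Complex.exp (2*Real.pi*Complex.I*n*x) - 1‖ ≤ 1/2 := by
    intro n hn
    have hval : ‖2*Real.pi*Complex.I*(n:ℂ)*(x:ℝ)‖ = 2*Real.pi*|(n:ℝ)| * x := by
      simp only [norm_mul, Complex.norm_real, Real.norm_eq_abs, Complex.norm_I, Complex.norm_two, Complex.norm_intCast]
      rw [_root_.abs_of_nonneg Real.pi_pos.le, _root_.abs_of_nonneg hx0]
      ring
    have hnN : |(n:ℝ)| ≤ (N:ℝ) := by exact_mod_cast (by exact_mod_cast hS n hn : (|n|:ℤ) ≤ (N:ℤ))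
    have hbd : 2*Real.pi*|(n:ℝ)| * x ≤ Real.pi/16 := by
      have h1 : 2*Real.pi*|(n:ℝ)| * x ≤ 2*Real.pi*(N:ℝ)*(1/(32*N)) := by
        have := Real.pi_pos
        have h2 : |(n:ℝ)| * x ≤ (N:ℝ)*(1/(32*N)) :=
          mul_le_mul hnN hx hx0 hNpos.le
        nlinarith
      rw [show (2:ℝ)*Real.pi*(N:ℝ)*(1/(32*N)) = Real.pi * (N / N) / 16 by ring] at h1
      rw [div_self hNpos.ne'] at h1
      linarith
    have hle1 : ‖2*Real.pi*Complex.I*(n:ℂ)*(x:ℝ)‖ ≤ 1 := by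
      rw [hval]; have := Real.pi_le_four; linarith [abs_nonneg ((n:ℝ)), Real.pi_pos]
    have := Complex.norm_exp_sub_one_le hle1
    rw [hval] at this
    have := Real.pi_le_four
    linarith [hbd]
  have hdiff : ‖(S.card : ℂ) - ∑ n ∈ S, Complex.exp (2*Real.pi*Complex.I*n*x)‖
      ≤ (S.card : ℝ)/2 := by
    have : (S.card : ℂ) - ∑ n ∈ S, Complex.exp (2*Real.pi*Complex.I*n*x)
        = ∑ n ∈ S, (1 - Complex.exp (2*Real.pi*Complex.I*n*x)) := by
      rw [Finset.sum_sub_distrib]; simp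
    rw [this]
    calc ‖∑ n ∈ S, (1 - Complex.exp (2*Real.pi*Complex.I*n*x))‖
        ≤ ∑ n ∈ S, ‖1 - Complex.exp (2*Real.pi*Complex.I*n*x)‖ :=
          norm_sum_le _ _
      _ ≤ ∑ n ∈ S, (1/2 : ℝ) := by
          refine Finset.sum_le_sum fun n hn => ?_
          rw [← norm_neg, neg_sub]
          exact hterm n hn
      _ = (S.card : ℝ)/2 := by simp; ring
  have htri : (S.card : ℝ) - ‖∑ n ∈ S, Complex.exp (2*Real.pi*Complex.I*n*x)‖
      ≤ ‖(S.card : ℂ) - ∑ n ∈ S, Complex.exp (2*Real.pi*Complex.I*n*x)‖ := by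
    have h := norm_sub_norm_le ((S.card : ℂ)) (∑ n ∈ S, Complex.exp (2*Real.pi*Complex.I*n*x))
    simpa using h
  linarith

theorem lambda_p_density (A : Set ℤ) (p : ℝ) (hp : 2 < p) (C : ℝ)
    (hA : ∀ (S : Finset ℤ), ↑S ⊆ A → ∀ a : ℤ → ℂ,
      (∫ x in (0:ℝ)..1,
          ‖∑ n ∈ S, a n * Complex.exp (2 * Real.pi * Complex.I * n * x)‖ ^ p) ^ (1/p) ≤
        C * (∫ x in (0:ℝ)..1,
          ‖∑ n ∈ S, a n * Complex.exp (2 * Real.pi * Complex.I * n * x)‖ ^ 2) ^ ((1:ℝ)/2)) :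
    ∃ C' : ℝ, ∀ N : ℕ, 1 ≤ N →
      ((A ∩ Set.Icc (-(N : ℤ)) N).ncard : ℝ) ≤ C' * (N : ℝ) ^ (2 / p) := by
  classical
  have hppos : (0:ℝ) < p := by linarith
  refine ⟨4 * C^2 * 32 ^ ((2:ℝ)/p), ?_⟩
  intro N hN
  have hNpos : (0:ℝ) < N := by exact_mod_cast hN
  have hfin : (A ∩ Set.Icc (-(N : ℤ)) N).Finite :=
    Set.Finite.inter_of_right (Set.finite_Icc _ _) A
  set S : Finset ℤ := hfin.toFinset with hSdef
  have hcard : (A ∩ Set.Icc (-(N : ℤ)) N).ncard = S.card := by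
    rw [Set.ncard_eq_toFinset_card _ hfin]
  have hSA : ↑S ⊆ A := by
    intro n hn
    rw [hSdef, Set.Finite.coe_toFinset] at hn
    exact hn.1
  have hSbd : ∀ n ∈ S, |n| ≤ (N:ℤ) := by
    intro n hn
    rw [hSdef, Set.Finite.mem_toFinset] at hn
    exact abs_le.mpr ⟨hn.2.1, hn.2.2⟩
  have hAS := hA S hSA (fun _ => 1)
  simp only [one_mul] at hAS
  rw [l2_eq] at hAS
  set s : ℝ := (S.card : ℝ) with hsdef
  rw [hcard]
  by_cases hs0 : S.card = 0
  · rw [hs0]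
    push_cast
    positivity
  have hspos : 0 < s := by
    rw [hsdef]; exact_mod_cast Nat.pos_of_ne_zero hs0
  set δ : ℝ := 1/(32*(N:ℝ)) with hδdef
  have hδpos : 0 < δ := by positivity
  have hδ1 : δ ≤ 1 := by
    rw [hδdef]
    rw [div_le_one (by positivity)]
    have : (1:ℝ) ≤ N := by exact_mod_cast hN
    linarith
  -- continuity of the integrand
  have hfc : Continuous fun x : ℝ =>
      ‖∑ n ∈ S, Complex.exp (2 * Real.pi * Complex.I * n * x)‖ ^ p := by
    have hsum : Continuous fun x : ℝ => ∑ n ∈ S, Complex.exp (2 * Real.pi * Complex.I * n * x) :=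
      continuous_finset_sum _ fun n _ =>
        Complex.continuous_exp.comp (continuous_const.mul Complex.continuous_ofReal)
    exact (Real.continuous_rpow_const hppos.le).comp (continuous_norm.comp hsum)
  -- lower bound for the p-integral
  have key1 : δ * (s/2)^p ≤ ∫ x in (0:ℝ)..δ,
      ‖∑ n ∈ S, Complex.exp (2 * Real.pi * Complex.I * n * x)‖ ^ p := by
    have := intervalIntegral.integral_const (a := (0:ℝ)) (b := δ) ((s/2)^p)
    rw [show δ * (s/2)^p = (δ - 0) • ((s/2)^p) by simp [smul_eq_mul]]
    rw [← this]
    apply intervalIntegral.integral_mono_on hδpos.le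
      (intervalIntegrable_const) (hfc.intervalIntegrable _ _)
    intro x hx
    have hlb := lower_bound S N hN hSbd hx.1 (le_trans hx.2 (le_refl δ))
    exact Real.rpow_le_rpow (by positivity) hlb hppos.le
  have key2 : (∫ x in (0:ℝ)..δ,
      ‖∑ n ∈ S, Complex.exp (2 * Real.pi * Complex.I * n * x)‖ ^ p)
      ≤ ∫ x in (0:ℝ)..1,
      ‖∑ n ∈ S, Complex.exp (2 * Real.pi * Complex.I * n * x)‖ ^ p := by
    apply intervalIntegral.integral_mono_interval le_rfl hδpos.le hδ1
    · filter_upwards with x using Real.rpow_nonneg (norm_nonneg _) p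
    · exact hfc.intervalIntegrable _ _
  -- combine with hAS
  have hchain : (δ * (s/2)^p) ^ (1/p) ≤ C * s ^ ((1:ℝ)/2) := by
    refine le_trans (Real.rpow_le_rpow (by positivity) (key1.trans key2) (by positivity)) hAS
  have hLHS : (δ * (s/2)^p) ^ (1/p) = δ ^ (1/p) * (s/2) := by
    rw [Real.mul_rpow hδpos.le (by positivity),
      ← Real.rpow_mul (by positivity : (0:ℝ) ≤ s/2), mul_one_div_cancel hppos.ne',
      Real.rpow_one]
  rw [hLHS] at hchain
  set t : ℝ := s ^ ((1:ℝ)/2) with htdef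
  have htpos : 0 < t := Real.rpow_pos_of_pos hspos _
  have hts : t * t = s := by
    rw [htdef, ← Real.rpow_add hspos]
    norm_num
  set D : ℝ := δ ^ (1/p) with hDdef
  have hDpos : 0 < D := Real.rpow_pos_of_pos hδpos _
  have h1 : D * t ≤ 2 * C := by nlinarith [hchain, hts, htpos]
  have h2 : t ≤ 2 * C / D := by
    rw [le_div_iff₀ hDpos]
    nlinarith [h1]
  have h3 : s ≤ (2 * C / D) * (2 * C / D) := by
    rw [← hts]
    exact mul_le_mul h2 h2 htpos.le (htpos.le.trans h2)
  have hD2 : D * D = δ ^ ((2:ℝ)/p) := by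
    rw [hDdef, ← Real.rpow_add hδpos]
    congr 1
    ring
  have h4 : (2 * C / D) * (2 * C / D) = 4 * C^2 * (δ ^ ((2:ℝ)/p))⁻¹ := by
    rw [← hD2]
    field_simp
    ring
  have h5 : (δ ^ ((2:ℝ)/p))⁻¹ = (32*(N:ℝ)) ^ ((2:ℝ)/p) := by
    rw [← Real.inv_rpow hδpos.le]
    congr 1
    rw [hδdef]
    field_simp
  have h6 : (32*(N:ℝ)) ^ ((2:ℝ)/p) = 32 ^ ((2:ℝ)/p) * (N:ℝ) ^ ((2:ℝ)/p) :=
    Real.mul_rpow (by norm_num) hNpos.le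
  calc s ≤ (2 * C / D) * (2 * C / D) := h3
    _ = 4 * C^2 * ((32:ℝ) ^ ((2:ℝ)/p) * (N:ℝ) ^ ((2:ℝ)/p)) := by rw [h4, h5, h6]
    _ = 4 * C^2 * 32 ^ ((2:ℝ)/p) * (N:ℝ) ^ ((2:ℝ)/p) := by ring
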